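/- Fix δ > −1. For every i ≥ 1, a(i,i) > 0, where a(i,j) = Σ_{m=1}^∞ ((m+δ)/(2+δ)) (b_1^{(i)} − b_m^{(i)} + b_{m+1}^{(i)})(b_1^{(j)} − b_m^{(j)} + b_{m+1}^{(j)}) p_m − (b_1^{(i)} − ((i+δ)/(2+δ)) Σ_{d=1}^i b_d^{(i)} p_d)(b_1^{(j)} − ((j+δ)/(2+δ)) Σ_{l=1}^j b_l^{(j)} p_l). -/

import Mathlib

open Finset

/-- `bcoef δ k j` is `b_j^{(k)} = (−1)^{k−j} Γ(k+δ)/((k−j)! Γ(j+δ))` for `j ≤ k`,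
with the convention `b_j^{(k)} = 0` for `j > k`. -/
noncomputable def bcoef (δ : ℝ) (k j : ℕ) : ℝ :=
  if j ≤ k then
    (-1 : ℝ) ^ (k - j) * Real.Gamma (k + δ) / ((Nat.factorial (k - j)) * Real.Gamma (j + δ))
  else 0

/-- `pk δ k` is the limiting degree frequency
`p_k = c(δ) Γ(k+δ)/Γ(k+3+2δ)` with `c(δ) = (2+δ)Γ(3+2δ)/Γ(1+δ)`, and `p_0 = 0`. -/
noncomputable def pk (δ : ℝ) (k : ℕ) : ℝ :=
  if k = 0 then 0
  else (2 + δ) * Real.Gamma (3 + 2 * δ) / Real.Gamma (1 + δ)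
    * Real.Gamma (k + δ) / Real.Gamma (k + 3 + 2 * δ)

/-- `acov δ i j` is the limit covariance
`a(i,j) = ∑_{m≥1} ((m+δ)/(2+δ)) (b₁⁽ⁱ⁾ − b_m⁽ⁱ⁾ + b_{m+1}⁽ⁱ⁾)(b₁⁽ʲ⁾ − b_m⁽ʲ⁾ + b_{m+1}⁽ʲ⁾) p_m
  − (b₁⁽ⁱ⁾ − ((i+δ)/(2+δ)) ∑_{d=1}^i b_d⁽ⁱ⁾ p_d)(b₁⁽ʲ⁾ − ((j+δ)/(2+δ)) ∑_{l=1}^j b_l⁽ʲ⁾ p_l)`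
(the `m = 0` term of the series vanishes since `p_0 = 0`). -/
noncomputable def acov (δ : ℝ) (i j : ℕ) : ℝ :=
  (∑' m : ℕ, ((m : ℝ) + δ) / (2 + δ)
      * (bcoef δ i 1 - bcoef δ i m + bcoef δ i (m + 1))
      * (bcoef δ j 1 - bcoef δ j m + bcoef δ j (m + 1)) * pk δ m)
    - (bcoef δ i 1 - ((i : ℝ) + δ) / (2 + δ) * ∑ d ∈ Finset.Icc 1 i, bcoef δ i d * pk δ d)
      * (bcoef δ j 1 - ((j : ℝ) + δ) / (2 + δ) * ∑ l ∈ Finset.Icc 1 j, bcoef δ j l * pk δ l)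


open Filter Topology
section AcovAux

noncomputable def tG (δ : ℝ) (m : ℕ) : ℝ :=
  Real.Gamma ((m : ℝ) + 1 + δ) / Real.Gamma ((m : ℝ) + 2 + 2 * δ)

lemma tG_pos {δ : ℝ} (hδ : -1 < δ) (m : ℕ) : 0 < tG δ m := by
  have h1 : (0:ℝ) < (m:ℝ) + 1 + δ := by have := m.cast_nonneg (α := ℝ); linarith
  have h2 : (0:ℝ) < (m:ℝ) + 2 + 2 * δ := by have := m.cast_nonneg (α := ℝ); linarith
  exact div_pos (Real.Gamma_pos_of_pos h1) (Real.Gamma_pos_of_pos h2)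

lemma tG_succ {δ : ℝ} (hδ : -1 < δ) (m : ℕ) :
    tG δ (m + 1) = tG δ m * (((m:ℝ) + 1 + δ) / ((m:ℝ) + 2 + 2 * δ)) := by
  have h1 : (0:ℝ) < (m:ℝ) + 1 + δ := by have := m.cast_nonneg (α := ℝ); linarith
  have h2 : (0:ℝ) < (m:ℝ) + 2 + 2 * δ := by have := m.cast_nonneg (α := ℝ); linarith
  have e1 : Real.Gamma (((m:ℝ) + 1) + 1 + δ) = ((m:ℝ) + 1 + δ) * Real.Gamma ((m:ℝ) + 1 + δ) := by
    rw [show ((m:ℝ) + 1) + 1 + δ = ((m:ℝ) + 1 + δ) + 1 by ring, Real.Gamma_add_one h1.ne']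
  have e2 : Real.Gamma (((m:ℝ) + 1) + 2 + 2 * δ)
      = ((m:ℝ) + 2 + 2 * δ) * Real.Gamma ((m:ℝ) + 2 + 2 * δ) := by
    rw [show ((m:ℝ) + 1) + 2 + 2 * δ = ((m:ℝ) + 2 + 2 * δ) + 1 by ring, Real.Gamma_add_one h2.ne']
  have g1 := Real.Gamma_pos_of_pos h1
  have g2 := Real.Gamma_pos_of_pos h2
  simp only [tG, Nat.cast_add, Nat.cast_one]
  rw [e1, e2]
  field_simp

lemma tG_tendsto {δ : ℝ} (hδ : -1 < δ) : Tendsto (tG δ) atTop (𝓝 0) := by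
  have h2 : ∀ m : ℕ, (0:ℝ) < (m:ℝ) + 2 + 2 * δ := by
    intro m; have := m.cast_nonneg (α := ℝ); linarith
  -- product formula
  have hprod : ∀ N : ℕ, tG δ N = tG δ 0 * ∏ m ∈ range N, (((m:ℝ) + 1 + δ) / ((m:ℝ) + 2 + 2 * δ)) := by
    intro N
    induction N with
    | zero => simp
    | succ n ih => rw [tG_succ hδ, ih, prod_range_succ]; ring
  have hbound : ∀ N : ℕ, tG δ N ≤ tG δ 0 * Real.exp (-((1 + δ) * ∑ m ∈ range N, 1 / ((m:ℝ) + 2 + 2 * δ))) := by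
    intro N
    rw [hprod N]
    have hfac : ∀ m ∈ range N, (((m:ℝ) + 1 + δ) / ((m:ℝ) + 2 + 2 * δ))
        ≤ Real.exp (-((1 + δ) / ((m:ℝ) + 2 + 2 * δ))) := by
      intro m _
      have h := Real.add_one_le_exp (-((1 + δ) / ((m:ℝ) + 2 + 2 * δ)))
      have hD := (h2 m).ne'
      have : ((m:ℝ) + 1 + δ) / ((m:ℝ) + 2 + 2 * δ) = -((1 + δ) / ((m:ℝ) + 2 + 2 * δ)) + 1 := by
        rw [div_eq_iff hD, add_mul, neg_mul, div_mul_cancel₀ _ hD]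
        ring
      rw [this]; exact h
    calc tG δ 0 * ∏ m ∈ range N, (((m:ℝ) + 1 + δ) / ((m:ℝ) + 2 + 2 * δ))
        ≤ tG δ 0 * ∏ m ∈ range N, Real.exp (-((1 + δ) / ((m:ℝ) + 2 + 2 * δ))) := by
          apply mul_le_mul_of_nonneg_left _ (tG_pos hδ 0).le
          apply Finset.prod_le_prod
          · intro m _
            have h1 : (0:ℝ) < (m:ℝ) + 1 + δ := by have := m.cast_nonneg (α := ℝ); linarith
            exact (div_pos h1 (h2 m)).le
          · exact hfac
      _ = tG δ 0 * Real.exp (-((1 + δ) * ∑ m ∈ range N, 1 / ((m:ℝ) + 2 + 2 * δ))) := by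
          rw [mul_sum, ← Finset.sum_neg_distrib, Real.exp_sum]
          congr 1
          apply Finset.prod_congr rfl
          intro m _
          congr 1
          field_simp
  -- divergence of the sum
  have hdiv : Tendsto (fun N : ℕ => (1 + δ) * ∑ m ∈ range N, 1 / ((m:ℝ) + 2 + 2 * δ)) atTop atTop := by
    have hharm := Real.tendsto_sum_range_one_div_nat_succ_atTop
    have hc : (0:ℝ) < (1 + δ) / (4 + 2 * δ) := by
      apply div_pos <;> linarith
    have hmono : ∀ N : ℕ, ((1 + δ) / (4 + 2 * δ)) * ∑ m ∈ range N, 1 / ((m:ℝ) + 1)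
        ≤ (1 + δ) * ∑ m ∈ range N, 1 / ((m:ℝ) + 2 + 2 * δ) := by
      intro N
      rw [mul_sum, mul_sum]
      apply Finset.sum_le_sum
      intro m _
      have hm := m.cast_nonneg (α := ℝ)
      rw [mul_one_div, mul_one_div, div_div, div_le_div_iff₀ (by nlinarith) (by linarith)]
      have key : (0:ℝ) ≤ (1 + δ) * ((3 + 2 * δ) * (m:ℝ) + 2) :=
        mul_nonneg (by linarith) (by nlinarith)
      nlinarith [key]
    apply tendsto_atTop_mono hmono
    exact (tendsto_const_mul_atTop_of_pos hc).mpr hharm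
  have hexp : Tendsto (fun N : ℕ => tG δ 0 * Real.exp (-((1 + δ) * ∑ m ∈ range N, 1 / ((m:ℝ) + 2 + 2 * δ)))) atTop (𝓝 0) := by
    rw [show (0:ℝ) = tG δ 0 * 0 by ring]
    exact (Real.tendsto_exp_neg_atTop_nhds_zero.comp hdiv).const_mul _
  exact squeeze_zero (fun N => (tG_pos hδ N).le) hbound hexp

noncomputable def qw (δ : ℝ) (m : ℕ) : ℝ := ((m : ℝ) + δ) / (2 + δ) * pk δ m


lemma pk_pos {δ : ℝ} (hδ : -1 < δ) {k : ℕ} (hk : 1 ≤ k) : 0 < pk δ k := by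
  have hk0 : (1:ℝ) ≤ (k:ℝ) := by exact_mod_cast hk
  rw [pk, if_neg (by omega)]
  have g1 := Real.Gamma_pos_of_pos (show (0:ℝ) < 3 + 2*δ by linarith)
  have g2 := Real.Gamma_pos_of_pos (show (0:ℝ) < 1 + δ by linarith)
  have g3 := Real.Gamma_pos_of_pos (show (0:ℝ) < (k:ℝ) + δ by linarith)
  have g4 := Real.Gamma_pos_of_pos (show (0:ℝ) < (k:ℝ) + 3 + 2*δ by linarith)
  exact div_pos (mul_pos (div_pos (mul_pos (by linarith) g1) g2) g3) g4

lemma qw_pos {δ : ℝ} (hδ : -1 < δ) {m : ℕ} (hm : 1 ≤ m) : 0 < qw δ m := by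
  have h1 : (1:ℝ) ≤ (m:ℝ) := by exact_mod_cast hm
  exact mul_pos (div_pos (by linarith) (by linarith)) (pk_pos hδ hm)

lemma qw_zero (δ : ℝ) : qw δ 0 = 0 := by simp [qw, pk]

lemma qw_nonneg {δ : ℝ} (hδ : -1 < δ) (m : ℕ) : 0 ≤ qw δ m := by
  rcases Nat.eq_zero_or_pos m with h | h
  · subst h; simp [qw_zero]
  · exact (qw_pos hδ h).le

/-- The telescoping auxiliary function. -/
noncomputable def Ftel (δ : ℝ) (m : ℕ) : ℝ :=
  Real.Gamma (3 + 2 * δ) / Real.Gamma (2 + δ) * tG δ (max m 1)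

lemma qw_telescope {δ : ℝ} (hδ : -1 < δ) (m : ℕ) :
    qw δ m = Ftel δ m - Ftel δ (m + 1) := by
  rcases Nat.eq_zero_or_pos m with h | h
  · subst h
    simp [qw, pk, Ftel]
  · have hmax1 : max m 1 = m := by omega
    have hmax2 : max (m + 1) 1 = m + 1 := by omega
    rw [Ftel, Ftel, hmax1, hmax2, tG_succ hδ m]
    have h1 : (1:ℝ) ≤ (m:ℝ) := by exact_mod_cast h
    have hg1 : (0:ℝ) < (m:ℝ) + 1 + δ := by linarith
    have hg2 : (0:ℝ) < (m:ℝ) + 2 + 2*δ := by linarith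
    have hgm : (0:ℝ) < (m:ℝ) + δ := by linarith
    rw [qw, pk, if_neg (by omega), tG]
    have e1 : Real.Gamma ((m:ℝ) + 1 + δ) = ((m:ℝ) + δ) * Real.Gamma ((m:ℝ) + δ) := by
      rw [show (m:ℝ) + 1 + δ = ((m:ℝ) + δ) + 1 by ring, Real.Gamma_add_one hgm.ne']
    have e2 : Real.Gamma ((m:ℝ) + 3 + 2 * δ)
        = ((m:ℝ) + 2 + 2 * δ) * Real.Gamma ((m:ℝ) + 2 + 2 * δ) := by
      rw [show (m:ℝ) + 3 + 2 * δ = ((m:ℝ) + 2 + 2 * δ) + 1 by ring, Real.Gamma_add_one hg2.ne']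
    have e3 : Real.Gamma (2 + δ) = (1 + δ) * Real.Gamma (1 + δ) := by
      rw [show (2:ℝ) + δ = (1 + δ) + 1 by ring, Real.Gamma_add_one (by linarith)]
    have p1 := Real.Gamma_pos_of_pos (show (0:ℝ) < 1 + δ by linarith)
    have p2 := Real.Gamma_pos_of_pos hgm
    have p3 := Real.Gamma_pos_of_pos hg2
    have p4 := Real.Gamma_pos_of_pos (show (0:ℝ) < 3 + 2*δ by linarith)
    rw [e1, e2, e3]
    have hne1 : ((2:ℝ) + δ) ≠ 0 := by linarith
    have hne2 : ((1:ℝ) + δ) ≠ 0 := by linarith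
    rw [div_mul_div_comm, mul_div_assoc, ← mul_sub, ← mul_one_sub]
    have hD : (↑m + 2 + 2 * δ : ℝ) ≠ 0 := hg2.ne'
    rw [show (1:ℝ) - (↑m + 1 + δ) / (↑m + 2 + 2 * δ) = (1 + δ) / (↑m + 2 + 2 * δ) by
      rw [eq_div_iff hD, sub_mul, div_mul_cancel₀ _ hD]; ring]
    field_simp

lemma hasSum_qw {δ : ℝ} (hδ : -1 < δ) : HasSum (qw δ) 1 := by
  have hp : ∀ N : ℕ, ∑ m ∈ range N, qw δ m = Ftel δ 0 - Ftel δ N := by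
    intro N
    calc ∑ m ∈ range N, qw δ m = ∑ m ∈ range N, (Ftel δ m - Ftel δ (m+1)) :=
          Finset.sum_congr rfl fun m _ => qw_telescope hδ m
      _ = Ftel δ 0 - Ftel δ N := Finset.sum_range_sub' (Ftel δ) N
  have hF0 : Ftel δ 0 = 1 := by
    have e3 : Real.Gamma (2 + δ) = (1 + δ) * Real.Gamma (1 + δ) := by
      rw [show (2:ℝ) + δ = (1 + δ) + 1 by ring, Real.Gamma_add_one (by linarith)]
    have p1 := Real.Gamma_pos_of_pos (show (0:ℝ) < 2 + δ by linarith)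
    have p4 := Real.Gamma_pos_of_pos (show (0:ℝ) < 3 + 2*δ by linarith)
    rw [Ftel, tG]
    norm_num
    field_simp
  have hFlim : Tendsto (fun N => Ftel δ N) atTop (𝓝 0) := by
    have : Tendsto (fun N : ℕ => Real.Gamma (3 + 2 * δ) / Real.Gamma (2 + δ) * tG δ N) atTop (𝓝 (Real.Gamma (3 + 2 * δ) / Real.Gamma (2 + δ) * 0)) :=
      (tG_tendsto hδ).const_mul _
    rw [mul_zero] at this
    apply this.congr'
    filter_upwards [eventually_ge_atTop 1] with N hN
    rw [Ftel, max_eq_left hN]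
  have htendsto : Tendsto (fun N => ∑ m ∈ range N, qw δ m) atTop (𝓝 1) := by
    simp only [hp]
    rw [show (1:ℝ) = Ftel δ 0 - 0 by rw [hF0]; ring]
    exact tendsto_const_nhds.sub hFlim
  have hsummable : Summable (qw δ) := by
    apply summable_of_sum_range_le (qw_nonneg hδ)
    intro n
    rw [hp]
    have : 0 < Ftel δ n := by
      have := tG_pos hδ (max n 1)
      have p1 := Real.Gamma_pos_of_pos (show (0:ℝ) < 2 + δ by linarith)
      have p4 := Real.Gamma_pos_of_pos (show (0:ℝ) < 3 + 2*δ by linarith)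
      rw [Ftel]; positivity
    linarith
  exact (hsummable.hasSum_iff_tendsto_nat).mpr htendsto

lemma pk_zero (δ : ℝ) : pk δ 0 = 0 := by simp [pk]

lemma bcoef_of_lt {δ : ℝ} {k j : ℕ} (h : k < j) : bcoef δ k j = 0 := by
  rw [bcoef, if_neg (by omega)]

lemma bcoef_self {δ : ℝ} (hδ : -1 < δ) {i : ℕ} (hi : 1 ≤ i) : bcoef δ i i = 1 := by
  have hpos : (0:ℝ) < (i:ℝ) + δ := by
    have : (1:ℝ) ≤ (i:ℝ) := by exact_mod_cast hi
    linarith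
  rw [bcoef, if_pos le_rfl, Nat.sub_self]
  simp [Real.Gamma_pos_of_pos hpos |>.ne']

/-- The key termwise identity: `(m+δ) b_{m+1} p_m = (m−i) b_m p_m`. -/
lemma bcoef_key {δ : ℝ} (hδ : -1 < δ) {i : ℕ} (hi : 1 ≤ i) (m : ℕ) :
    ((m:ℝ) + δ) * bcoef δ i (m + 1) * pk δ m = ((m:ℝ) - (i:ℝ)) * bcoef δ i m * pk δ m := by
  rcases Nat.eq_zero_or_pos m with h0 | h0
  · subst h0; simp [pk_zero]
  rcases lt_or_ge m i with hmi | hmi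
  · -- 1 ≤ m < i
    obtain ⟨r, hr⟩ : ∃ r, i = m + 1 + r := ⟨i - m - 1, by omega⟩
    subst hr
    have h1 : (1:ℝ) ≤ (m:ℝ) := by exact_mod_cast h0
    have hgm : (0:ℝ) < (m:ℝ) + δ := by linarith
    have e1 : Real.Gamma ((m:ℝ) + 1 + δ) = ((m:ℝ) + δ) * Real.Gamma ((m:ℝ) + δ) := by
      rw [show (m:ℝ) + 1 + δ = ((m:ℝ) + δ) + 1 by ring, Real.Gamma_add_one hgm.ne']
    have hb1 : bcoef δ (m + 1 + r) (m + 1)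
        = (-1:ℝ) ^ r * Real.Gamma ((m:ℝ) + 1 + (r:ℝ) + δ)
          / ((Nat.factorial r) * (((m:ℝ) + δ) * Real.Gamma ((m:ℝ) + δ))) := by
      rw [bcoef, if_pos (by omega), show m + 1 + r - (m + 1) = r by omega, ← e1]
      push_cast
      ring_nf
    have hb2 : bcoef δ (m + 1 + r) m
        = (-1:ℝ) ^ (r + 1) * Real.Gamma ((m:ℝ) + 1 + (r:ℝ) + δ)
          / ((Nat.factorial (r + 1)) * Real.Gamma ((m:ℝ) + δ)) := by
      rw [bcoef, if_pos (by omega), show m + 1 + r - m = r + 1 by omega]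
      push_cast
      ring_nf
    rw [hb1, hb2]
    have hfr : ((Nat.factorial r : ℝ)) ≠ 0 := by exact_mod_cast (Nat.factorial_pos r).ne'
    have hfr1 : ((Nat.factorial (r+1) : ℝ)) = ((r:ℝ) + 1) * (Nat.factorial r : ℝ) := by
      rw [Nat.factorial_succ]; push_cast; ring
    have hgm' := (Real.Gamma_pos_of_pos hgm).ne'
    have hcast : ((m + 1 + r : ℕ) : ℝ) = (m:ℝ) + 1 + (r:ℝ) := by push_cast; ring
    rw [hfr1, hcast]
    have hr1 : ((r:ℝ) + 1) ≠ 0 := by positivity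
    field_simp
    ring
  · -- m ≥ i : both sides vanish
    rcases eq_or_lt_of_le hmi with rfl | hmi'
    · rw [bcoef_of_lt (by omega)]
      simp
    · rw [bcoef_of_lt (by omega), bcoef_of_lt (by omega)]
      simp

end AcovAux

/-- For every `i ≥ 1`, the limiting variance `a(i,i)` is strictly positive. -/


theorem acov_diag_pos (δ : ℝ) (hδ : -1 < δ) (i : ℕ) (hi : 1 ≤ i) :
    0 < acov δ i i := by
  have h2δ : (0:ℝ) < 2 + δ := by linarith
  set X : ℕ → ℝ := fun m => bcoef δ i 1 - bcoef δ i m + bcoef δ i (m + 1) with hX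
  set b1 : ℝ := bcoef δ i 1 with hb1
  set μ : ℝ := b1 - ((i : ℝ) + δ) / (2 + δ) * ∑ d ∈ Finset.Icc 1 i, bcoef δ i d * pk δ d with hμdef
  have hq1 : HasSum (qw δ) 1 := hasSum_qw hδ
  have hXtail : ∀ m, i + 1 ≤ m → X m = b1 := by
    intro m hm
    simp only [hX, bcoef_of_lt (show i < m by omega), bcoef_of_lt (show i < m + 1 by omega)]
    ring
  -- termwise identity
  have hterm : ∀ m : ℕ, qw δ m * (bcoef δ i (m + 1) - bcoef δ i m)
      = -(((i:ℝ) + δ) / (2 + δ)) * (bcoef δ i m * pk δ m) := by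
    intro m
    have hk := bcoef_key hδ hi m
    simp only [qw]
    field_simp
    linarith [hk]
  -- the finite correction sums
  have hrange_icc : ∑ d ∈ range (i + 1), bcoef δ i d * pk δ d
      = ∑ d ∈ Finset.Icc 1 i, bcoef δ i d * pk δ d := by
    rw [show range (i + 1) = insert 0 (Finset.Icc 1 i) by ext x; simp; omega,
      Finset.sum_insert (by simp)]
    simp [pk_zero]
  have hEval : ∑ m ∈ range (i + 1), qw δ m * (X m - b1)
      = -(((i:ℝ) + δ) / (2 + δ)) * ∑ d ∈ Finset.Icc 1 i, bcoef δ i d * pk δ d := by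
    rw [← hrange_icc, Finset.mul_sum]
    apply Finset.sum_congr rfl
    intro m _
    have : X m - b1 = bcoef δ i (m + 1) - bcoef δ i m := by simp only [hX]; ring
    rw [this, hterm m]
  -- HasSum for qw * X
  have hasSum_e : HasSum (fun m => qw δ m * (X m - b1)) (∑ m ∈ range (i + 1), qw δ m * (X m - b1)) := by
    apply hasSum_sum_of_ne_finset_zero
    intro m hm
    have : i + 1 ≤ m := by simpa using hm
    rw [hXtail m this]
    ring
  have hμ : HasSum (fun m => qw δ m * X m) μ := by
    have h := (hq1.mul_left b1).add hasSum_e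
    have hfun : (fun m => b1 * qw δ m + qw δ m * (X m - b1)) = fun m => qw δ m * X m := by
      funext m; ring
    rw [hfun] at h
    rw [show μ = b1 * 1 + ∑ m ∈ range (i + 1), qw δ m * (X m - b1) by rw [hEval, hμdef]; ring]
    exact h
  -- HasSum for qw * X^2
  set E2 : ℝ := ∑ m ∈ range (i + 1), qw δ m * (X m ^ 2 - b1 ^ 2) with hE2
  have hasSum_e2 : HasSum (fun m => qw δ m * (X m ^ 2 - b1 ^ 2)) E2 := by
    apply hasSum_sum_of_ne_finset_zero
    intro m hm
    have : i + 1 ≤ m := by simpa using hm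
    rw [hXtail m this]
    ring
  have hS : HasSum (fun m => qw δ m * X m ^ 2) (b1 ^ 2 + E2) := by
    have h := (hq1.mul_left (b1 ^ 2)).add hasSum_e2
    have hfun : (fun m => b1 ^ 2 * qw δ m + qw δ m * (X m ^ 2 - b1 ^ 2))
        = fun m => qw δ m * X m ^ 2 := by funext m; ring
    rw [hfun] at h
    rw [show b1 ^ 2 + E2 = b1 ^ 2 * 1 + E2 by ring]
    exact h
  -- variance has-sum
  have hvar : HasSum (fun m => qw δ m * (X m - μ) ^ 2) ((b1 ^ 2 + E2) - μ * μ) := by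
    have h := (hS.sub (hμ.mul_left (2 * μ))).add (hq1.mul_left (μ ^ 2))
    have hfun : (fun m => (qw δ m * X m ^ 2 - 2 * μ * (qw δ m * X m)) + μ ^ 2 * qw δ m)
        = fun m => qw δ m * (X m - μ) ^ 2 := by funext m; ring
    rw [hfun] at h
    rw [show (b1 ^ 2 + E2) - μ * μ = (b1 ^ 2 + E2) - 2 * μ * μ + μ ^ 2 * 1 by ring]
    exact h
  -- acov equals the variance
  have hacov : acov δ i i = (b1 ^ 2 + E2) - μ * μ := by
    rw [acov]
    have htsum : (∑' m : ℕ, ((m : ℝ) + δ) / (2 + δ)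
        * (bcoef δ i 1 - bcoef δ i m + bcoef δ i (m + 1))
        * (bcoef δ i 1 - bcoef δ i m + bcoef δ i (m + 1)) * pk δ m)
        = ∑' m : ℕ, qw δ m * X m ^ 2 := by
      apply tsum_congr
      intro m
      simp only [qw, hX]
      ring
    rw [htsum, hS.tsum_eq]
  rw [hacov]
  -- strict positivity
  have hXi : X i = b1 - 1 := by
    simp only [hX, bcoef_self hδ hi, bcoef_of_lt (show i < i + 1 by omega)]
    ring
  have hg_nonneg : ∀ m, 0 ≤ qw δ m * (X m - μ) ^ 2 := fun m =>
    mul_nonneg (qw_nonneg hδ m) (sq_nonneg _)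
  by_cases hbμ : μ = b1
  · have hgi : 0 < qw δ i * (X i - μ) ^ 2 := by
      rw [hXi, hbμ, show b1 - 1 - b1 = -1 by ring]
      have := qw_pos hδ hi
      nlinarith
    calc (0:ℝ) < qw δ i * (X i - μ) ^ 2 := hgi
      _ ≤ (b1 ^ 2 + E2) - μ * μ := le_hasSum hvar i fun j _ => hg_nonneg j
  · have hgi : 0 < qw δ (i + 1) * (X (i + 1) - μ) ^ 2 := by
      rw [hXtail (i + 1) le_rfl]
      have h1 := qw_pos hδ (show 1 ≤ i + 1 by omega)
      have h2 : b1 - μ ≠ 0 := fun h => hbμ (by linarith [sub_eq_zero.mp h])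
      positivity
    calc (0:ℝ) < qw δ (i + 1) * (X (i + 1) - μ) ^ 2 := hgi
      _ ≤ (b1 ^ 2 + E2) - μ * μ := le_hasSum hvar (i + 1) fun j _ => hg_nonneg j
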